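/- Propagation of Gaussian initial data for the fitness f(x) = x²: if u₀(x) = √(a/(2π)) e^{-a(x-m)²/2} with a > 0 and m ∈ ℝ, then for every 0 < t < arctan(aσ)/(2σ) and every x ∈ ℝ the explicit solution satisfies u(t,x) = √(a(t)/(2π)) e^{-a(t)(x - m(t))²/2}, where a(t) = (aσ - tan(2σt)) / (σ(1 + aσ tan(2σt))) and m(t) = m a σ / (aσ cos(2σt) - sin(2σt)). In particular, for such u₀ one has T = arctan(aσ)/(2σ) < π/(4σ). -/

import Mathlib

open MeasureTheory

/-- The explicit solution of the replicator-mutator equation with fitness `f(x) = x²`. -/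
noncomputable def uTrig (σ : ℝ) (u₀ : ℝ → ℝ) (t x : ℝ) : ℝ :=
  (Real.sqrt (2 * Real.pi * σ * Real.tan (2 * σ * t)))⁻¹
    * Real.exp (Real.tan (2 * σ * t) * x ^ 2 / (2 * σ))
    * (∫ y : ℝ, Real.exp (-(x / Real.cos (2 * σ * t) - y) ^ 2
        / (2 * σ * Real.tan (2 * σ * t))) * u₀ y)
    / (∫ y : ℝ, Real.exp (Real.tan (2 * σ * t) * y ^ 2 / (2 * σ)) * u₀ y)

/-- The maximal existence time `T` for the fitness `f(x) = x²`. -/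
noncomputable def Tmax (σ : ℝ) (u₀ : ℝ → ℝ) : ℝ :=
  sSup {t : ℝ | 0 ≤ t ∧ t < Real.pi / (4 * σ) ∧
    MeasureTheory.Integrable (fun y : ℝ => Real.exp (Real.tan (2 * σ * t) * y ^ 2 / (2 * σ)) * u₀ y)}

lemma gauss_integral (α β γ : ℝ) (hα : 0 < α) :
    ∫ y : ℝ, Real.exp (-α * y ^ 2 + β * y + γ)
      = Real.sqrt (Real.pi / α) * Real.exp (β ^ 2 / (4 * α) + γ) := by
  have hb : ((-α : ℂ)).re < 0 := by simpa using hα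
  have h := integral_cexp_quadratic hb (β : ℂ) (γ : ℂ)
  have hL : (∫ x : ℝ, Complex.exp ((-α : ℂ) * x ^ 2 + β * x + γ))
      = ((∫ y : ℝ, Real.exp (-α * y ^ 2 + β * y + γ) : ℝ) : ℂ) := by
    calc (∫ x : ℝ, Complex.exp ((-α : ℂ) * x ^ 2 + β * x + γ))
        = ∫ x : ℝ, ((Real.exp (-α * x ^ 2 + β * x + γ) : ℝ) : ℂ) := by
          congr 1; ext x
          rw [show ((-α : ℂ) * x ^ 2 + β * x + γ) = ((-α * x ^ 2 + β * x + γ : ℝ) : ℂ) by push_cast; ring]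
          exact (Complex.ofReal_exp _).symm
      _ = _ := integral_ofReal
  rw [hL] at h
  have hR : ((Real.pi : ℂ) / -(-α : ℂ)) ^ (1 / 2 : ℂ) * Complex.exp ((γ : ℂ) - (β : ℂ) ^ 2 / (4 * (-α : ℂ)))
      = ((Real.sqrt (Real.pi / α) * Real.exp (β ^ 2 / (4 * α) + γ) : ℝ) : ℂ) := by
    rw [neg_neg]
    have h1 : ((Real.pi : ℂ) / (α : ℂ)) = ((Real.pi / α : ℝ) : ℂ) := by push_cast; ring
    have h12 : ((1 / 2 : ℝ) : ℂ) = (1 / 2 : ℂ) := by norm_num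
    rw [h1, ← h12, ← Complex.ofReal_cpow (by positivity) (1/2 : ℝ)]
    have h2 : ((γ : ℂ) - (β : ℂ) ^ 2 / (4 * (-α : ℂ))) = ((β ^ 2 / (4 * α) + γ : ℝ) : ℂ) := by
      have : (α : ℂ) ≠ 0 := by exact_mod_cast hα.ne'
      push_cast
      field_simp
      ring
    rw [h2, ← Complex.ofReal_exp, ← Complex.ofReal_mul, Real.sqrt_eq_rpow]
  rw [hR] at h
  exact_mod_cast h

lemma gauss_integrable (α β γ : ℝ) (hα : 0 < α) :
    Integrable (fun y : ℝ => Real.exp (-α * y ^ 2 + β * y + γ)) := by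
  have h := (integrable_cexp_quadratic (b := (α : ℂ)) (by simpa using hα) (β : ℂ) (γ : ℂ)).re
  refine h.congr (Filter.Eventually.of_forall fun y => ?_)
  have h2 : ((-α : ℂ)) * y ^ 2 + β * y + γ = ((-α * y ^ 2 + β * y + γ : ℝ) : ℂ) := by push_cast; ring
  show (Complex.exp (-(α:ℂ) * y ^ 2 + β * y + γ)).re = _
  rw [h2, ← Complex.ofReal_exp, Complex.ofReal_re]

lemma not_integrable_of_bound (f : ℝ → ℝ) (δ : ℝ) (hδ : 0 < δ) (H : Set ℝ)
    (hm : MeasurableSet H) (hvol : volume H = ⊤) (hb : ∀ y ∈ H, δ ≤ f y) :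
    ¬ Integrable f := by
  intro hint
  have hIOn : IntegrableOn f H := hint.integrableOn
  have hconst : IntegrableOn (fun _ : ℝ => δ) H := by
    refine Integrable.mono' hIOn ?_ ?_
    · exact aestronglyMeasurable_const
    · rw [ae_restrict_iff' hm]
      filter_upwards with y hy
      rw [Real.norm_eq_abs, abs_of_pos hδ]
      exact hb y hy
  rw [integrableOn_const_iff] at hconst
  rcases hconst with h | h
  · exact hδ.ne' (enorm_eq_zero.mp h)
  · rw [hvol] at h; exact (lt_irrefl _) h

lemma aux_rearrange (S1 S2 S3 K E1 E2 E3 : ℝ) (hK : K ≠ 0) (hS3 : S3 ≠ 0) (hE2 : E2 ≠ 0) :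
    S1⁻¹ * E3 * (K * (S2 * E1)) / (K * (S3 * E2)) = S1⁻¹ * S2 / S3 * (E3 * E1 / E2) := by
  rw [show S1⁻¹ * E3 * (K * (S2 * E1)) / (K * (S3 * E2))
      = S1⁻¹ * E3 * (S2 * E1) / (S3 * E2) * (K / K) by ring, div_self hK, mul_one]
  ring

set_option maxHeartbeats 2000000 in
theorem propagation_of_gaussian_data_pos_quadratic
    (σ : ℝ) (hσ : 0 < σ) (a m : ℝ) (ha : 0 < a) (u₀ : ℝ → ℝ)
    (hu₀ : u₀ = fun x => Real.sqrt (a / (2 * Real.pi)) * Real.exp (-a * (x - m) ^ 2 / 2)) :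
    (∀ t : ℝ, 0 < t → t < Real.arctan (a * σ) / (2 * σ) → ∀ x : ℝ,
      uTrig σ u₀ t x
        = Real.sqrt ((a * σ - Real.tan (2 * σ * t))
              / (σ * (1 + a * σ * Real.tan (2 * σ * t))) / (2 * Real.pi))
          * Real.exp (-((a * σ - Real.tan (2 * σ * t))
              / (σ * (1 + a * σ * Real.tan (2 * σ * t))))
            * (x - m * a * σ / (a * σ * Real.cos (2 * σ * t) - Real.sin (2 * σ * t))) ^ 2
            / 2)) ∧
    Tmax σ u₀ = Real.arctan (a * σ) / (2 * σ) ∧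
    Real.arctan (a * σ) / (2 * σ) < Real.pi / (4 * σ) := by
  have hπ := Real.pi_pos
  have h2σ : 0 < 2 * σ := by linarith
  have harctan_pos : 0 < Real.arctan (a * σ) := by
    rw [← Real.arctan_zero]
    exact Real.arctan_strictMono (by positivity)
  have harctan_lt : Real.arctan (a * σ) < Real.pi / 2 := Real.arctan_lt_pi_div_two _
  have hpart3 : Real.arctan (a * σ) / (2 * σ) < Real.pi / (4 * σ) := by
    rw [show Real.pi / (4 * σ) = (Real.pi / 2) / (2 * σ) by ring]
    exact div_lt_div_of_pos_right harctan_lt h2σ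
  have htan_lt : ∀ θ : ℝ, 0 ≤ θ → θ < Real.arctan (a * σ) → Real.tan θ < a * σ := by
    intro θ hθ0 hθlt
    have h1 : θ ∈ Set.Ioo (-(Real.pi/2)) (Real.pi/2) :=
      ⟨by linarith, lt_trans hθlt harctan_lt⟩
    have h2 : Real.arctan (a * σ) ∈ Set.Ioo (-(Real.pi/2)) (Real.pi/2) :=
      ⟨by linarith, harctan_lt⟩
    have := Real.strictMonoOn_tan h1 h2 hθlt
    rwa [Real.tan_arctan] at this
  refine ⟨?_, ?_, hpart3⟩
  · -- Part 1 : the explicit formula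
    intro t ht0 htlt x
    have hθ0 : 0 < 2 * σ * t := by positivity
    have hθlt : 2 * σ * t < Real.arctan (a * σ) := by
      have := (lt_div_iff₀ h2σ).mp htlt
      linarith
    have hθπ : 2 * σ * t < Real.pi / 2 := lt_trans hθlt harctan_lt
    have hs0 : 0 < Real.tan (2 * σ * t) :=
      Real.tan_pos_of_pos_of_lt_pi_div_two hθ0 hθπ
    have hc0 : 0 < Real.cos (2 * σ * t) :=
      Real.cos_pos_of_mem_Ioo ⟨by linarith, hθπ⟩
    have hsa : Real.tan (2 * σ * t) < a * σ := htan_lt _ hθ0.le hθlt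
    set s := Real.tan (2 * σ * t) with hs_def
    set c := Real.cos (2 * σ * t) with hc_def
    have hcne : c ≠ 0 := ne_of_gt hc0
    have hsne : s ≠ 0 := ne_of_gt hs0
    have hσne : σ ≠ 0 := ne_of_gt hσ
    have h1as : (0:ℝ) < 1 + a * σ * s := by positivity
    have h1asne : (1:ℝ) + a * σ * s ≠ 0 := ne_of_gt h1as
    have has : (0:ℝ) < a * σ - s := by linarith
    have hasne : a * σ - s ≠ 0 := ne_of_gt has
    have hc2 : c ^ 2 * (1 + s ^ 2) = 1 := by
      rw [hs_def, hc_def, Real.tan_eq_sin_div_cos]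
      have hcc : Real.cos (2 * σ * t) ≠ 0 := ne_of_gt hc0
      field_simp
      exact Real.cos_sq_add_sin_sq _
    have hsin : Real.sin (2 * σ * t) = s * c := by
      rw [hs_def, hc_def, Real.tan_eq_sin_div_cos]
      field_simp
      exact (mul_div_cancel_right₀ _ (ne_of_gt hc0)).symm
    have hα₁ : (0:ℝ) < (1 + a * σ * s) / (2 * σ * s) := by positivity
    have hα₂ : (0:ℝ) < (a * σ - s) / (2 * σ) := by positivity
    have hKa : (0:ℝ) < Real.sqrt (a / (2 * Real.pi)) := Real.sqrt_pos.mpr (by positivity)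
    have h1 : (∫ y : ℝ, Real.exp (-(x / c - y) ^ 2 / (2 * σ * s)) * u₀ y)
        = Real.sqrt (a / (2 * Real.pi)) * (Real.sqrt (Real.pi / ((1 + a * σ * s) / (2 * σ * s)))
            * Real.exp ((x / (c * σ * s) + a * m) ^ 2 / (4 * ((1 + a * σ * s) / (2 * σ * s)))
              + (-x ^ 2 / (2 * σ * s * c ^ 2) - a * m ^ 2 / 2))) := by
      rw [hu₀]
      have e : ∀ y : ℝ, Real.exp (-(x / c - y) ^ 2 / (2 * σ * s))
            * (Real.sqrt (a / (2 * Real.pi)) * Real.exp (-a * (y - m) ^ 2 / 2))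
          = Real.sqrt (a / (2 * Real.pi))
            * Real.exp (-((1 + a * σ * s) / (2 * σ * s)) * y ^ 2
                + (x / (c * σ * s) + a * m) * y
                + (-x ^ 2 / (2 * σ * s * c ^ 2) - a * m ^ 2 / 2)) := by
        intro y
        rw [mul_left_comm, ← Real.exp_add]
        congr 1
        field_simp
        ring
      simp_rw [e]
      rw [integral_const_mul, gauss_integral _ _ _ hα₁]
    have h2 : (∫ y : ℝ, Real.exp (s * y ^ 2 / (2 * σ)) * u₀ y)
        = Real.sqrt (a / (2 * Real.pi)) * (Real.sqrt (Real.pi / ((a * σ - s) / (2 * σ)))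
            * Real.exp ((a * m) ^ 2 / (4 * ((a * σ - s) / (2 * σ))) + (-(a * m ^ 2) / 2))) := by
      rw [hu₀]
      have e : ∀ y : ℝ, Real.exp (s * y ^ 2 / (2 * σ))
            * (Real.sqrt (a / (2 * Real.pi)) * Real.exp (-a * (y - m) ^ 2 / 2))
          = Real.sqrt (a / (2 * Real.pi))
            * Real.exp (-((a * σ - s) / (2 * σ)) * y ^ 2 + (a * m) * y + (-(a * m ^ 2) / 2)) := by
        intro y
        rw [mul_left_comm, ← Real.exp_add]
        congr 1
        field_simp
        ring
      simp_rw [e]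
      rw [integral_const_mul, gauss_integral _ _ _ hα₂]
    rw [uTrig, ← hs_def, ← hc_def, h1, h2, hsin]
    have hMden : a * σ * c - s * c ≠ 0 := by
      have h : a * σ * c - s * c = c * (a * σ - s) := by ring
      rw [h]
      positivity
    have hexp : s * x ^ 2 / (2 * σ)
          + ((x / (c * σ * s) + a * m) ^ 2 / (4 * ((1 + a * σ * s) / (2 * σ * s)))
              + (-x ^ 2 / (2 * σ * s * c ^ 2) - a * m ^ 2 / 2))
          - ((a * m) ^ 2 / (4 * ((a * σ - s) / (2 * σ))) + (-(a * m ^ 2) / 2))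
        = -((a * σ - s) / (σ * (1 + a * σ * s)))
            * (x - m * a * σ / (a * σ * c - s * c)) ^ 2 / 2 := by
      have h1' : 1 + s * σ * a ≠ 0 := by rw [show 1 + s * σ * a = 1 + a * σ * s by ring]; exact h1asne
      have h2' : σ * a - s ≠ 0 := by rw [show σ * a - s = a * σ - s by ring]; exact hasne
      linear_combination (norm := (field_simp; ring))
        (a * x ^ 2 / (2 * c ^ 2 * (1 + a * σ * s))
          - a ^ 2 * m ^ 2 * σ / (2 * c ^ 2 * (1 + a * σ * s) * (a * σ - s))) * hc2
    have hsqrtpos₂ : (0:ℝ) < Real.sqrt (Real.pi / ((a * σ - s) / (2 * σ))) :=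
      Real.sqrt_pos.mpr (by positivity)
    have hsqA : (Real.sqrt (2 * Real.pi * σ * s))⁻¹
          * Real.sqrt (Real.pi / ((1 + a * σ * s) / (2 * σ * s)))
          / Real.sqrt (Real.pi / ((a * σ - s) / (2 * σ)))
        = Real.sqrt ((a * σ - s) / (σ * (1 + a * σ * s)) / (2 * Real.pi)) := by
      rw [← Real.sqrt_inv, ← Real.sqrt_mul (by positivity), ← Real.sqrt_div (by positivity)]
      congr 1
      field_simp
    have hKane : Real.sqrt (a / (2 * Real.pi)) ≠ 0 := ne_of_gt hKa
    have hsq2ne : Real.sqrt (Real.pi / ((a * σ - s) / (2 * σ))) ≠ 0 := ne_of_gt hsqrtpos₂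
    have he1 : Real.exp ((a * m) ^ 2 / (4 * ((a * σ - s) / (2 * σ))) + (-(a * m ^ 2) / 2)) ≠ 0 :=
      (Real.exp_pos _).ne'
    rw [aux_rearrange _ _ _ _ _ _ _ hKane hsq2ne he1, ← Real.exp_add, ← Real.exp_sub, hsqA, hexp]
  · -- Part 2 : Tmax
    have hset : {t : ℝ | 0 ≤ t ∧ t < Real.pi / (4 * σ) ∧
          Integrable (fun y : ℝ => Real.exp (Real.tan (2 * σ * t) * y ^ 2 / (2 * σ)) * u₀ y)}
        = Set.Ico 0 (Real.arctan (a * σ) / (2 * σ)) := by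
      ext t
      simp only [Set.mem_setOf_eq, Set.mem_Ico]
      constructor
      · rintro ⟨ht0, htπ, hint⟩
        refine ⟨ht0, ?_⟩
        by_contra hge
        push_neg at hge
        have hθπ : 2 * σ * t < Real.pi / 2 := by
          have := (lt_div_iff₀ (by positivity : (0:ℝ) < 4 * σ)).mp htπ
          linarith
        have hθge : Real.arctan (a * σ) ≤ 2 * σ * t := by
          have := (div_le_iff₀ h2σ).mp hge
          linarith
        have hsge : a * σ ≤ Real.tan (2 * σ * t) := by
          have h1 : Real.arctan (a * σ) ∈ Set.Ioo (-(Real.pi/2)) (Real.pi/2) :=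
            ⟨by linarith, harctan_lt⟩
          have h2 : 2 * σ * t ∈ Set.Ioo (-(Real.pi/2)) (Real.pi/2) :=
            ⟨by linarith, hθπ⟩
          have := Real.strictMonoOn_tan.monotoneOn h1 h2 hθge
          rwa [Real.tan_arctan] at this
        set s := Real.tan (2 * σ * t) with hs_def
        rw [hu₀] at hint
        set δ := Real.sqrt (a / (2 * Real.pi)) * Real.exp (-(a * m ^ 2) / 2) with hδ_def
        have hδ : 0 < δ := by positivity
        have hbound : ∀ y : ℝ, 0 ≤ m * y →
            δ ≤ Real.exp (s * y ^ 2 / (2 * σ))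
              * (Real.sqrt (a / (2 * Real.pi)) * Real.exp (-a * (y - m) ^ 2 / 2)) := by
          intro y hmy
          rw [mul_left_comm, ← Real.exp_add, hδ_def]
          refine mul_le_mul_of_nonneg_left ?_ (Real.sqrt_nonneg _)
          apply Real.exp_le_exp.mpr
          have h1 : a * y ^ 2 / 2 ≤ s * y ^ 2 / (2 * σ) := by
            rw [div_le_div_iff₀ (by norm_num) (by positivity)]
            nlinarith [sq_nonneg y]
          nlinarith [sq_nonneg y]
        rcases le_or_gt 0 m with hm | hm
        · exact not_integrable_of_bound _ δ hδ (Set.Ici 0) measurableSet_Ici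
            Real.volume_Ici (fun y hy => hbound y (mul_nonneg hm hy)) hint
        · exact not_integrable_of_bound _ δ hδ (Set.Iic 0) measurableSet_Iic
            Real.volume_Iic
            (fun y hy => hbound y (by
              have h0 := mul_nonneg (neg_nonneg.mpr hm.le) (neg_nonneg.mpr (Set.mem_Iic.mp hy))
              nlinarith [h0])) hint
      · rintro ⟨ht0, htlt⟩
        refine ⟨ht0, lt_trans htlt hpart3, ?_⟩
        have hθ0 : 0 ≤ 2 * σ * t := by positivity
        have hθlt : 2 * σ * t < Real.arctan (a * σ) := by
          have := (lt_div_iff₀ h2σ).mp htlt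
          linarith
        have hsa : Real.tan (2 * σ * t) < a * σ := htan_lt _ hθ0 hθlt
        set s := Real.tan (2 * σ * t) with hs_def
        have hα₂ : (0:ℝ) < (a * σ - s) / (2 * σ) :=
          div_pos (by linarith) (by linarith)
        rw [hu₀]
        have e : (fun y : ℝ => Real.exp (s * y ^ 2 / (2 * σ))
              * (Real.sqrt (a / (2 * Real.pi)) * Real.exp (-a * (y - m) ^ 2 / 2)))
            = fun y : ℝ => Real.sqrt (a / (2 * Real.pi))
              * Real.exp (-((a * σ - s) / (2 * σ)) * y ^ 2 + (a * m) * y + (-(a * m ^ 2) / 2)) := by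
          funext y
          rw [mul_left_comm, ← Real.exp_add]
          congr 1
          field_simp
          ring
        rw [e]
        exact (gauss_integrable _ _ _ hα₂).const_mul _
    rw [Tmax, hset]
    exact csSup_Ico (div_pos harctan_pos h2σ)
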